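/- Let A be a finite arc set, N a nonempty finite node set with m := |N|, and tail : A → N a map assigning each arc its tail node, such that every node has at least one arc with that tail. Let g_o ≥ 1 and let w : A → ℝ satisfy 1 ≤ w_a for every a ∈ A and Σ_{a: tail(a)=i} w_a ≤ g_o for every i ∈ N. For a ∈ A write r_a := w_a / Σ_{a': tail(a')=tail(a)} w_{a'}. Then: (i) Σ_{a∈A} |ln r_a| ≤ g_o · m · ln(|A| / m), and (ii) Σ_{a∈A} (ln r_a)² ≤ (ln g_o)² · |A|. -/

import Mathlib

open Finset

lemma jensen_log {ι : Type*} (s : Finset ι) (q z : ι → ℝ)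
    (hq : ∀ i ∈ s, 0 ≤ q i) (hq1 : ∑ i ∈ s, q i = 1)
    (hz : ∀ i ∈ s, 0 < z i) :
    ∑ i ∈ s, q i * Real.log (z i) ≤ Real.log (∑ i ∈ s, q i * z i) := by
  have hprod : ∀ i ∈ s, (0:ℝ) < z i ^ q i := fun i hi => Real.rpow_pos_of_pos (hz i hi) _
  have h1 : (0:ℝ) < ∏ i ∈ s, z i ^ q i := Finset.prod_pos hprod
  have h2 := Real.geom_mean_le_arith_mean_weighted s q z hq hq1 (fun i hi => (hz i hi).le)
  calc ∑ i ∈ s, q i * Real.log (z i) = Real.log (∏ i ∈ s, z i ^ q i) := by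
        rw [Real.log_prod (fun i hi => (hprod i hi).ne')]
        exact Finset.sum_congr rfl fun i hi => (Real.log_rpow (hz i hi) _).symm
    _ ≤ Real.log (∑ i ∈ s, q i * z i) := Real.log_le_log h1 h2

/-- Bounds on the gradient of the entropy term (from the proof of
Lemma 13 of the paper). With `r_a = w_a / Σ_{a' : tail a' = tail a} w_{a'}`, `w_a ≥ 1`
and node flows at most `g_o`:
(i) `Σ_a |ln r_a| ≤ g_o · m · ln(|A|/m)` and (ii) `Σ_a (ln r_a)² ≤ (ln g_o)² · |A|`. -/
theorem stmt_13 {A N : Type*} [Fintype A] [Fintype N] [DecidableEq N] [Nonempty N]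
    (tail : A → N) (htail : ∀ i : N, ∃ a : A, tail a = i)
    (go : ℝ) (hgo : 1 ≤ go)
    (w : A → ℝ) (hw : ∀ a, 1 ≤ w a)
    (hflow : ∀ i : N, ∑ a ∈ univ.filter fun a' => tail a' = i, w a ≤ go)
    (r : A → ℝ)
    (hr : ∀ a, r a = w a / ∑ a' ∈ univ.filter fun a' => tail a' = tail a, w a') :
    (∑ a : A, |Real.log (r a)|
        ≤ go * (Fintype.card N : ℝ)
            * Real.log ((Fintype.card A : ℝ) / (Fintype.card N : ℝ)))
    ∧ (∑ a : A, (Real.log (r a)) ^ 2 ≤ (Real.log go) ^ 2 * (Fintype.card A : ℝ)) := by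
  classical
  set F : N → Finset A := fun i => univ.filter (fun a => tail a = i) with hF
  set S : N → ℝ := fun i => ∑ a ∈ F i, w a with hSdef
  have hgo0 : (0:ℝ) < go := lt_of_lt_of_le one_pos hgo
  have hwpos : ∀ a, (0:ℝ) < w a := fun a => lt_of_lt_of_le one_pos (hw a)
  have hFne : ∀ i, (F i).Nonempty := by
    intro i
    obtain ⟨a, ha⟩ := htail i
    exact ⟨a, by simp [hF, ha]⟩
  have hSpos : ∀ i, 0 < S i := fun i =>
    Finset.sum_pos (fun a _ => hwpos a) (hFne i)
  have hwleS : ∀ a, w a ≤ S (tail a) := by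
    intro a
    apply Finset.single_le_sum (fun b _ => (hwpos b).le)
    simp [hF]
  have hSgo : ∀ i, S i ≤ go := fun i => hflow i
  have hrdef : ∀ a, r a = w a / S (tail a) := fun a => hr a
  have hrpos : ∀ a, 0 < r a := fun a => by
    rw [hrdef a]; exact div_pos (hwpos a) (hSpos _)
  have hrle1 : ∀ a, r a ≤ 1 := fun a => by
    rw [hrdef a]; exact div_le_one_of_le₀ (hwleS a) (hSpos _).le
  have hlog_nonpos : ∀ a, Real.log (r a) ≤ 0 := fun a =>
    Real.log_nonpos (hrpos a).le (hrle1 a)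
  have habs : ∀ a, |Real.log (r a)| = Real.log (S (tail a) / w a) := by
    intro a
    rw [abs_of_nonpos (hlog_nonpos a), hrdef a,
      Real.log_div (hwpos a).ne' (hSpos _).ne',
      Real.log_div (hSpos _).ne' (hwpos a).ne']
    ring
  have habsnn : ∀ a, 0 ≤ Real.log (S (tail a) / w a) := by
    intro a
    apply Real.log_nonneg
    rw [le_div_iff₀ (hwpos a)]
    simpa using hwleS a
  -- per node Jensen
  have key1 : ∀ i, ∑ a ∈ F i, w a * Real.log (S i / w a)
      ≤ S i * Real.log ((F i).card) := by
    intro i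
    have hj := jensen_log (F i) (fun a => w a / S i) (fun a => S i / w a)
      (fun a _ => div_nonneg (hwpos a).le (hSpos i).le)
      (by rw [← Finset.sum_div]; exact div_self (hSpos i).ne')
      (fun a _ => div_pos (hSpos i) (hwpos a))
    have hzsum : ∑ a ∈ F i, (w a / S i) * (S i / w a) = ((F i).card : ℝ) := by
      have h1 : ∀ a ∈ F i, (w a / S i) * (S i / w a) = 1 := by
        intro a _
        rw [div_mul_div_comm, mul_comm (w a)]
        exact div_self (mul_pos (hSpos i) (hwpos a)).ne'
      rw [Finset.sum_congr rfl h1, Finset.sum_const, nsmul_eq_mul, mul_one]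
    rw [hzsum] at hj
    have h := mul_le_mul_of_nonneg_left hj (hSpos i).le
    calc ∑ a ∈ F i, w a * Real.log (S i / w a)
        = S i * ∑ a ∈ F i, (w a / S i) * Real.log (S i / w a) := by
          rw [Finset.mul_sum]
          apply Finset.sum_congr rfl
          intro a _
          have hS : S i ≠ 0 := (hSpos i).ne'
          field_simp
      _ ≤ S i * Real.log ((F i).card) := h
  have hcardpos : ∀ i, (1:ℝ) ≤ ((F i).card : ℝ) := by
    intro i
    exact_mod_cast Finset.card_pos.mpr (hFne i)
  have hlogcard_nn : ∀ i, (0:ℝ) ≤ Real.log ((F i).card) := fun i =>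
    Real.log_nonneg (hcardpos i)
  -- sum of fiber cardinalities
  have hcardA : ∑ i : N, ((F i).card : ℝ) = (Fintype.card A : ℝ) := by
    have h : ∑ i : N, (F i).card = Fintype.card A := by
      rw [← Finset.card_univ]
      exact (Finset.card_eq_sum_card_fiberwise
        (fun (a : A) (_ : a ∈ (univ : Finset A)) => mem_univ (tail a))).symm
    exact_mod_cast congrArg (Nat.cast (R := ℝ)) h
  have hm : (0:ℝ) < (Fintype.card N : ℝ) := by
    exact_mod_cast Fintype.card_pos
  -- Jensen over nodes
  have key2 : ∑ i : N, Real.log ((F i).card)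
      ≤ (Fintype.card N : ℝ) * Real.log ((Fintype.card A : ℝ) / (Fintype.card N : ℝ)) := by
    have hj := jensen_log (univ : Finset N) (fun _ => 1 / (Fintype.card N : ℝ))
      (fun i => ((F i).card : ℝ))
      (fun i _ => by positivity)
      (by
        rw [Finset.sum_const, Finset.card_univ, nsmul_eq_mul]
        field_simp)
      (fun i _ => lt_of_lt_of_le one_pos (hcardpos i))
    have hzsum : ∑ i : N, (1 / (Fintype.card N : ℝ)) * ((F i).card : ℝ)
        = (Fintype.card A : ℝ) / (Fintype.card N : ℝ) := by
      rw [← Finset.mul_sum, hcardA]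
      ring
    rw [hzsum] at hj
    have := mul_le_mul_of_nonneg_left hj hm.le
    calc ∑ i : N, Real.log ((F i).card)
        = (Fintype.card N : ℝ) * ∑ i : N, (1 / (Fintype.card N : ℝ)) * Real.log ((F i).card) := by
          rw [Finset.mul_sum]
          apply Finset.sum_congr rfl
          intro i _
          field_simp
      _ ≤ _ := this
  constructor
  · calc ∑ a : A, |Real.log (r a)|
        ≤ ∑ a : A, w a * Real.log (S (tail a) / w a) := by
          apply Finset.sum_le_sum
          intro a _
          rw [habs a]
          exact le_mul_of_one_le_left (habsnn a) (hw a)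
      _ = ∑ i : N, ∑ a ∈ F i, w a * Real.log (S (tail a) / w a) := by
          exact (Finset.sum_fiberwise_of_maps_to (fun a _ => mem_univ (tail a)) _).symm
      _ = ∑ i : N, ∑ a ∈ F i, w a * Real.log (S i / w a) := by
          apply Finset.sum_congr rfl
          intro i _
          apply Finset.sum_congr rfl
          intro a ha
          have : tail a = i := by simpa [hF] using ha
          rw [this]
      _ ≤ ∑ i : N, go * Real.log ((F i).card) := by
          apply Finset.sum_le_sum
          intro i _
          exact (key1 i).trans (mul_le_mul_of_nonneg_right (hSgo i) (hlogcard_nn i))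
      _ = go * ∑ i : N, Real.log ((F i).card) := by rw [Finset.mul_sum]
      _ ≤ go * ((Fintype.card N : ℝ)
            * Real.log ((Fintype.card A : ℝ) / (Fintype.card N : ℝ))) :=
          mul_le_mul_of_nonneg_left key2 hgo0.le
      _ = go * (Fintype.card N : ℝ)
            * Real.log ((Fintype.card A : ℝ) / (Fintype.card N : ℝ)) := by ring
  · have hbound : ∀ a, (Real.log (r a)) ^ 2 ≤ (Real.log go) ^ 2 := by
      intro a
      have h1 : -Real.log go ≤ Real.log (r a) := by
        have : Real.log (1 / go) ≤ Real.log (r a) := by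
          apply Real.log_le_log (by positivity)
          rw [hrdef a]
          exact div_le_div₀ (hwpos a).le (hw a) (hSpos _) (hSgo _)
        rwa [one_div, Real.log_inv] at this
      have h2 : Real.log (r a) ≤ Real.log go :=
        (hlog_nonpos a).trans (Real.log_nonneg hgo)
      exact sq_le_sq' h1 h2
    calc ∑ a : A, (Real.log (r a)) ^ 2 ≤ ∑ _a : A, (Real.log go) ^ 2 :=
          Finset.sum_le_sum (fun a _ => hbound a)
      _ = (Real.log go) ^ 2 * (Fintype.card A : ℝ) := by
          rw [Finset.sum_const, Finset.card_univ, nsmul_eq_mul]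
          ring
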